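/- arXiv:2011.01322 — 8 statements merged into one kernel-verified Lean document; each statement's English description precedes it below -/
import Mathlib

section
/- Let N ≥ 2 be an integer, let λ be a nonzero real number, and let φ ∈ L²(ℝ^{N-1}; ℂ). Then ∫_{ℝ^{N-1}} ∫_{0}^{∞} ( |ξ'|²/(λ² + |ξ'|²) + 1 ) · exp(−2 x_N √(λ² + |ξ'|²)) · |φ(ξ')|² dx_N dξ' = (1/2) ∫_{ℝ^{N-1}} (λ² + 2|ξ'|²) (λ² + |ξ'|²)^{-3/2} |φ(ξ')|² dξ', and this quantity is at most |λ|^{-1} ∫_{ℝ^{N-1}} |φ(ξ')|² dξ'. -/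
open MeasureTheory ENNReal Real

/-- Squared L² norm of the gradient of the explicit half-space Neumann Helmholtz
solution, computed via Plancherel, with the resulting `|λ|^{-1}` bound. -/
theorem halfspace_neumann_gradient_L2_norm (N : ℕ) (hN : 2 ≤ N) (lam : ℝ) (hlam : lam ≠ 0)
    (φ : EuclideanSpace ℝ (Fin (N - 1)) → ℂ) (hφ : MemLp φ 2) :
    (∫⁻ ξ, ∫⁻ t in Set.Ioi (0 : ℝ),
        ENNReal.ofReal ((‖ξ‖ ^ 2 / (lam ^ 2 + ‖ξ‖ ^ 2) + 1) *
          Real.exp (-2 * t * Real.sqrt (lam ^ 2 + ‖ξ‖ ^ 2)) * ‖φ ξ‖ ^ 2)) =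
      (∫⁻ ξ, ENNReal.ofReal
        ((1 / 2) * ((lam ^ 2 + 2 * ‖ξ‖ ^ 2) * (lam ^ 2 + ‖ξ‖ ^ 2) ^ (-(3 : ℝ) / 2)) *
          ‖φ ξ‖ ^ 2)) ∧
    (∫⁻ ξ, ENNReal.ofReal
        ((1 / 2) * ((lam ^ 2 + 2 * ‖ξ‖ ^ 2) * (lam ^ 2 + ‖ξ‖ ^ 2) ^ (-(3 : ℝ) / 2)) *
          ‖φ ξ‖ ^ 2)) ≤
      ENNReal.ofReal (|lam|⁻¹) * ∫⁻ ξ, ENNReal.ofReal (‖φ ξ‖ ^ 2) := by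
  have hlam2 : (0 : ℝ) < lam ^ 2 := by positivity
  constructor
  · refine lintegral_congr fun ξ => ?_
    set s : ℝ := ‖ξ‖ ^ 2 with hsdef
    have hs : (0 : ℝ) ≤ s := by positivity
    have hd : (0 : ℝ) < lam ^ 2 + s := by positivity
    set c : ℝ := Real.sqrt (lam ^ 2 + s) with hcdef
    have hc : (0 : ℝ) < c := Real.sqrt_pos.mpr hd
    have hcsq : c ^ 2 = lam ^ 2 + s := Real.sq_sqrt hd.le
    set B : ℝ := ‖φ ξ‖ ^ 2 with hBdef
    have hB : (0 : ℝ) ≤ B := by positivity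
    set K : ℝ := (s / (lam ^ 2 + s) + 1) * B with hKdef
    have hK : (0 : ℝ) ≤ K := by positivity
    have h2c : (0 : ℝ) < 2 * c := by positivity
    -- the t-integral of the exponential
    have hint : (∫ t in Set.Ioi (0 : ℝ), Real.exp (-(2 * c * t))) = 1 / (2 * c) := by
      have := Real.integral_rpow_mul_exp_neg_mul_Ioi (a := 1) one_pos h2c
      simpa using this
    have hInt : IntegrableOn (fun t : ℝ => Real.exp (-(2 * c * t))) (Set.Ioi 0) := by
      simpa [neg_mul] using exp_neg_integrableOn_Ioi 0 h2c
    calc (∫⁻ t in Set.Ioi (0 : ℝ),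
            ENNReal.ofReal ((s / (lam ^ 2 + s) + 1) * Real.exp (-2 * t * c) * B))
        = ∫⁻ t in Set.Ioi (0 : ℝ),
            ENNReal.ofReal K * ENNReal.ofReal (Real.exp (-(2 * c * t))) := by
          refine lintegral_congr fun t => ?_
          rw [← ENNReal.ofReal_mul hK]
          congr 1
          rw [show (-2 : ℝ) * t * c = -(2 * c * t) by ring]
          ring
      _ = ENNReal.ofReal K * ∫⁻ t in Set.Ioi (0 : ℝ),
            ENNReal.ofReal (Real.exp (-(2 * c * t))) :=
          lintegral_const_mul' _ _ ENNReal.ofReal_ne_top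
      _ = ENNReal.ofReal K * ENNReal.ofReal (1 / (2 * c)) := by
          rw [← MeasureTheory.ofReal_integral_eq_lintegral_ofReal hInt
            (Filter.Eventually.of_forall fun t => (Real.exp_pos _).le), hint]
      _ = ENNReal.ofReal ((1 / 2) * ((lam ^ 2 + 2 * s) * (lam ^ 2 + s) ^ (-(3 : ℝ) / 2)) * B) := by
          rw [← ENNReal.ofReal_mul hK]
          congr 1
          have hrpow : (lam ^ 2 + s) ^ (-(3 : ℝ) / 2) = ((lam ^ 2 + s) * c)⁻¹ := by
            rw [show (-(3 : ℝ) / 2) = -((1 : ℝ) + 1 / 2) by norm_num,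
              Real.rpow_neg hd.le, Real.rpow_add hd, Real.rpow_one, ← Real.sqrt_eq_rpow]
          rw [hrpow, hKdef, show s / (lam ^ 2 + s) + 1 = (lam ^ 2 + 2 * s) / (lam ^ 2 + s) by
            field_simp; ring]
          field_simp
  · have hpt : ∀ ξ : EuclideanSpace ℝ (Fin (N - 1)),
        ENNReal.ofReal ((1 / 2) * ((lam ^ 2 + 2 * ‖ξ‖ ^ 2) *
            (lam ^ 2 + ‖ξ‖ ^ 2) ^ (-(3 : ℝ) / 2)) * ‖φ ξ‖ ^ 2) ≤
          ENNReal.ofReal (|lam|⁻¹) * ENNReal.ofReal (‖φ ξ‖ ^ 2) := by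
      intro ξ
      rw [← ENNReal.ofReal_mul (by positivity)]
      refine ENNReal.ofReal_le_ofReal ?_
      have hd : (0 : ℝ) < lam ^ 2 + ‖ξ‖ ^ 2 := by positivity
      have h1 : (1 / 2 : ℝ) * ((lam ^ 2 + 2 * ‖ξ‖ ^ 2) *
          (lam ^ 2 + ‖ξ‖ ^ 2) ^ (-(3 : ℝ) / 2)) ≤ |lam|⁻¹ := by
        have hle : lam ^ 2 + 2 * ‖ξ‖ ^ 2 ≤ 2 * (lam ^ 2 + ‖ξ‖ ^ 2) := by nlinarith [sq_nonneg lam]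
        have hrp : (0 : ℝ) < (lam ^ 2 + ‖ξ‖ ^ 2) ^ (-(3 : ℝ) / 2) := Real.rpow_pos_of_pos hd _
        have step1 : (1 / 2 : ℝ) * ((lam ^ 2 + 2 * ‖ξ‖ ^ 2) *
            (lam ^ 2 + ‖ξ‖ ^ 2) ^ (-(3 : ℝ) / 2)) ≤
            (lam ^ 2 + ‖ξ‖ ^ 2) * (lam ^ 2 + ‖ξ‖ ^ 2) ^ (-(3 : ℝ) / 2) := by
          nlinarith
        have step2 : (lam ^ 2 + ‖ξ‖ ^ 2) * (lam ^ 2 + ‖ξ‖ ^ 2) ^ (-(3 : ℝ) / 2) =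
            (lam ^ 2 + ‖ξ‖ ^ 2) ^ (-(1 : ℝ) / 2) := by
          rw [← Real.rpow_one_add' hd.le (by norm_num)]
          norm_num
        have step3 : (lam ^ 2 + ‖ξ‖ ^ 2) ^ (-(1 : ℝ) / 2) ≤ (lam ^ 2) ^ (-(1 : ℝ) / 2) :=
          Real.rpow_le_rpow_of_nonpos (by positivity) (by nlinarith [sq_nonneg ‖ξ‖]) (by norm_num)
        have step4 : (lam ^ 2 : ℝ) ^ (-(1 : ℝ) / 2) = |lam|⁻¹ := by
          rw [show (-(1 : ℝ) / 2) = -(1 / 2) by norm_num, Real.rpow_neg (by positivity),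
            ← Real.sqrt_eq_rpow, Real.sqrt_sq_eq_abs]
        linarith [step1, step2 ▸ step1, step3]
      exact mul_le_mul_of_nonneg_right h1 (by positivity)
    exact le_of_le_of_eq (lintegral_mono hpt) (lintegral_const_mul' _ _ ENNReal.ofReal_ne_top)
end

section
/- Let N ≥ 2 be an integer, let λ be a nonzero real number, and let φ ∈ L²(ℝ^{N-1}; ℂ). Then λ² ∫_{ℝ^{N-1}} ∫_{0}^{∞} x_N · (λ² + 2|ξ'|²) (λ² + |ξ'|²)^{-1} · exp(−2 x_N √(λ² + |ξ'|²)) · |φ(ξ')|² dx_N dξ' ≤ (1/2) ∫_{ℝ^{N-1}} |φ(ξ')|² dξ'. -/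
open MeasureTheory ENNReal Real

lemma lintegral_t_exp (b : ℝ) (hb : 0 < b) :
    ∫⁻ t in Set.Ioi (0 : ℝ), ENNReal.ofReal (t * Real.exp (-(b * t)))
      = ENNReal.ofReal (1 / b ^ 2) := by
  have hint : IntegrableOn (fun t : ℝ => t * Real.exp (-(b * t))) (Set.Ioi 0) := by
    have := integrableOn_rpow_mul_exp_neg_mul_rpow (p := 1) (s := 1) (b := b)
      (by norm_num) one_pos hb
    refine this.congr_fun (fun t ht => ?_) measurableSet_Ioi
    simp [Real.rpow_one, neg_mul]
  have hval : ∫ t in Set.Ioi (0 : ℝ), t * Real.exp (-(b * t)) = 1 / b ^ 2 := by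
    have h := integral_rpow_mul_exp_neg_mul_Ioi (a := 2) (r := b) (by norm_num) hb
    have heq : ∀ t ∈ Set.Ioi (0 : ℝ),
        t * Real.exp (-(b * t)) = t ^ ((2 : ℝ) - 1) * Real.exp (-(b * t)) := by
      intro t ht
      norm_num
    rw [setIntegral_congr_fun measurableSet_Ioi heq, h, Real.Gamma_two, mul_one,
      div_rpow (by norm_num) hb.le, Real.one_rpow]
    rw [show ((2 : ℝ)) = ((2 : ℕ) : ℝ) by norm_num, Real.rpow_natCast]
  rw [← hval, ← MeasureTheory.ofReal_integral_eq_lintegral_ofReal hint]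
  filter_upwards [ae_restrict_mem measurableSet_Ioi] with t ht
  exact mul_nonneg (le_of_lt ht) (Real.exp_pos _).le

/-- Weighted gradient estimate `|λ|² ‖√x_N ∇u‖² ≤ (1/2)‖h‖²` for the explicit
half-space Neumann Helmholtz solution, on the Fourier side. -/
theorem halfspace_neumann_weighted_gradient (N : ℕ) (hN : 2 ≤ N) (lam : ℝ) (hlam : lam ≠ 0)
    (φ : EuclideanSpace ℝ (Fin (N - 1)) → ℂ) (hφ : MemLp φ 2) :
    ENNReal.ofReal (lam ^ 2) *
      (∫⁻ ξ, ∫⁻ t in Set.Ioi (0 : ℝ),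
        ENNReal.ofReal (t * ((lam ^ 2 + 2 * ‖ξ‖ ^ 2) * (lam ^ 2 + ‖ξ‖ ^ 2)⁻¹) *
          Real.exp (-2 * t * Real.sqrt (lam ^ 2 + ‖ξ‖ ^ 2)) * ‖φ ξ‖ ^ 2)) ≤
      ENNReal.ofReal (1 / 2) * ∫⁻ ξ, ENNReal.ofReal (‖φ ξ‖ ^ 2) := by
  rw [← lintegral_const_mul' _ _ ofReal_ne_top, ← lintegral_const_mul' _ _ ofReal_ne_top]
  refine lintegral_mono fun ξ => ?_
  set s : ℝ := ‖ξ‖ ^ 2 with hs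
  have hs0 : 0 ≤ s := sq_nonneg _
  have hpos : 0 < lam ^ 2 + s := by positivity
  set σ : ℝ := Real.sqrt (lam ^ 2 + s) with hσ
  have hσpos : 0 < σ := Real.sqrt_pos.2 hpos
  have hσsq : σ ^ 2 = lam ^ 2 + s := Real.sq_sqrt hpos.le
  set C : ℝ := (lam ^ 2 + 2 * s) * (lam ^ 2 + s)⁻¹ with hC
  have hC0 : 0 ≤ C := by positivity
  set a : ℝ := ‖φ ξ‖ ^ 2 with ha
  have ha0 : 0 ≤ a := sq_nonneg _
  have hinner : ∫⁻ t in Set.Ioi (0 : ℝ),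
      ENNReal.ofReal (t * C * Real.exp (-2 * t * σ) * a)
      = ENNReal.ofReal (C * a) * ENNReal.ofReal (1 / (2 * σ) ^ 2) := by
    rw [← lintegral_t_exp (2 * σ) (by positivity), ← lintegral_const_mul' _ _ ofReal_ne_top]
    refine setLIntegral_congr_fun measurableSet_Ioi (fun t ht => ?_)
    rw [← ENNReal.ofReal_mul (by positivity)]
    ring_nf
  rw [hinner, ← ENNReal.ofReal_mul (mul_nonneg hC0 ha0), ← ENNReal.ofReal_mul (sq_nonneg lam),
    ← ENNReal.ofReal_mul (by norm_num : (0:ℝ) ≤ 1 / 2)]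
  refine ENNReal.ofReal_le_ofReal ?_
  have hkey : lam ^ 2 * (C * (1 / (2 * σ) ^ 2)) ≤ 1 / 2 := by
    have h2 : (2 * σ) ^ 2 = 4 * (lam ^ 2 + s) := by rw [mul_pow, hσsq]; ring
    rw [h2, hC, div_eq_mul_inv, one_mul]
    have hlam2 : 0 < lam ^ 2 := by positivity
    calc lam ^ 2 * ((lam ^ 2 + 2 * s) * (lam ^ 2 + s)⁻¹ * (4 * (lam ^ 2 + s))⁻¹)
        = (lam ^ 2 * (lam ^ 2 + 2 * s)) / ((lam ^ 2 + s) * (4 * (lam ^ 2 + s))) := by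
          field_simp
      _ ≤ 1 / 2 := by
          rw [div_le_div_iff₀ (by positivity) (by norm_num)]
          nlinarith
  calc lam ^ 2 * (C * a * (1 / (2 * σ) ^ 2))
      = (lam ^ 2 * (C * (1 / (2 * σ) ^ 2))) * a := by ring
    _ ≤ 1 / 2 * a := mul_le_mul_of_nonneg_right hkey ha0
end

section
/- Let N ≥ 2 be an integer, let λ be a nonzero real number, and let φ ∈ L²(ℝ^{N-1}; ℂ). Then ∫_{ℝ^{N-1}} ∫_{0}^{∞} x_N · (λ² + 2|ξ'|²)² (λ² + |ξ'|²)^{-1} · exp(−2 x_N √(λ² + |ξ'|²)) · |φ(ξ')|² dx_N dξ' ≤ ∫_{ℝ^{N-1}} |φ(ξ')|² dξ'. -/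
open MeasureTheory ENNReal Real

lemma aux_lintegral_t_exp (r : ℝ) (hr : 0 < r) :
    ∫⁻ t in Set.Ioi (0 : ℝ), ENNReal.ofReal (t * Real.exp (-(r * t)))
      = ENNReal.ofReal (1 / r ^ 2) := by
  have hint : IntegrableOn (fun t : ℝ => t * Real.exp (-(r * t))) (Set.Ioi 0) := by
    have := integrableOn_rpow_mul_exp_neg_mul_rpow (p := 1) (s := 1) (b := r)
      (by norm_num) zero_lt_one hr
    simpa [Real.rpow_one] using this
  rw [← ofReal_integral_eq_lintegral_ofReal hint
      ((ae_restrict_iff' measurableSet_Ioi).2 (Filter.Eventually.of_forall fun t ht =>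
        mul_nonneg (le_of_lt ht) (Real.exp_pos _).le))]
  congr 1
  have h := integral_rpow_mul_exp_neg_mul_Ioi (a := 2) (r := r) (by norm_num) hr
  have h2 : Real.Gamma 2 = 1 := by
    rw [(by norm_num : (2:ℝ) = 1 + 1), Real.Gamma_add_one one_ne_zero, Real.Gamma_one, mul_one]
  rw [show (2:ℝ) - 1 = 1 by norm_num] at h
  simp only [Real.rpow_one, h2, mul_one] at h
  rw [h, show (2:ℝ) = ((2:ℕ):ℝ) by norm_num, Real.rpow_natCast, div_pow, one_pow]

/-- Weighted second-derivative estimate `‖√x_N ∇²u‖² ≤ ‖h‖²` for the explicit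
half-space Neumann Helmholtz solution, on the Fourier side. -/
theorem halfspace_neumann_weighted_second_derivative (N : ℕ) (hN : 2 ≤ N)
    (lam : ℝ) (hlam : lam ≠ 0)
    (φ : EuclideanSpace ℝ (Fin (N - 1)) → ℂ) (hφ : MemLp φ 2) :
    (∫⁻ ξ, ∫⁻ t in Set.Ioi (0 : ℝ),
        ENNReal.ofReal (t * ((lam ^ 2 + 2 * ‖ξ‖ ^ 2) ^ 2 * (lam ^ 2 + ‖ξ‖ ^ 2)⁻¹) *
          Real.exp (-2 * t * Real.sqrt (lam ^ 2 + ‖ξ‖ ^ 2)) * ‖φ ξ‖ ^ 2)) ≤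
      ∫⁻ ξ, ENNReal.ofReal (‖φ ξ‖ ^ 2) := by
  refine lintegral_mono fun ξ => ?_
  set s : ℝ := lam ^ 2 + ‖ξ‖ ^ 2 with hs
  have hspos : 0 < s := by
    have h1 : 0 < lam ^ 2 := by positivity
    positivity
  set a : ℝ := Real.sqrt s with ha
  have hapos : 0 < a := Real.sqrt_pos.2 hspos
  set C : ℝ := (lam ^ 2 + 2 * ‖ξ‖ ^ 2) ^ 2 * s⁻¹ with hC
  have hCnn : 0 ≤ C := by positivity
  set m : ℝ := ‖φ ξ‖ ^ 2 with hm
  have hmnn : 0 ≤ m := by positivity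
  calc ∫⁻ t in Set.Ioi (0 : ℝ),
        ENNReal.ofReal (t * C * Real.exp (-2 * t * a) * m)
      = ∫⁻ t in Set.Ioi (0 : ℝ),
        ENNReal.ofReal (C * m) * ENNReal.ofReal (t * Real.exp (-((2 * a) * t))) := by
        refine lintegral_congr fun t => ?_
        rw [← ENNReal.ofReal_mul (by positivity)]
        congr 1
        ring_nf
    _ = ENNReal.ofReal (C * m) * ENNReal.ofReal (1 / (2 * a) ^ 2) := by
        rw [lintegral_const_mul' _ _ ENNReal.ofReal_ne_top,
          aux_lintegral_t_exp (2 * a) (by positivity)]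
    _ ≤ ENNReal.ofReal m := by
        rw [← ENNReal.ofReal_mul (by positivity)]
        refine ENNReal.ofReal_le_ofReal ?_
        have hsq : a ^ 2 = s := Real.sq_sqrt hspos.le
        have hkey : (lam ^ 2 + 2 * ‖ξ‖ ^ 2) ^ 2 ≤ 4 * s ^ 2 := by
          have h1 : lam ^ 2 + 2 * ‖ξ‖ ^ 2 ≤ 2 * s := by rw [hs]; nlinarith [sq_nonneg lam]
          nlinarith [sq_nonneg (lam ^ 2 + 2 * ‖ξ‖ ^ 2), sq_nonneg lam, sq_nonneg ‖ξ‖]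
        have : C * (1 / (2 * a) ^ 2) = (lam ^ 2 + 2 * ‖ξ‖ ^ 2) ^ 2 / (4 * s ^ 2) := by
          rw [hC]; field_simp [hsq]; ring_nf; rw [hsq]
        calc C * m * (1 / (2 * a) ^ 2) = (C * (1 / (2 * a) ^ 2)) * m := by ring
          _ ≤ 1 * m := by
              refine mul_le_mul_of_nonneg_right ?_ hmnn
              rw [this, div_le_one (by positivity)]
              linarith [hkey]
          _ = m := one_mul m
end

section
/- Let N ≥ 2 be an integer, let λ be a nonzero real number, and let ψ ∈ L²(ℝ^{N-1}; ℂ). Then ∫_{ℝ^{N-1}} ∫_{0}^{∞} (λ² + 2|ξ'|²) · exp(−2 x_N √(λ² + |ξ'|²)) · |ψ(ξ')|² dx_N dξ' = (1/2) ∫_{ℝ^{N-1}} (λ² + 2|ξ'|²)(λ² + |ξ'|²)^{-1/2} |ψ(ξ')|² dξ', and this quantity is at most (1/2) ∫_{ℝ^{N-1}} ( |λ| + |ξ'| + |λ|^{-1}|ξ'|² ) |ψ(ξ')|² dξ'. -/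
open MeasureTheory ENNReal Real

lemma exp_neg_mul_integral {b : ℝ} (hb : 0 < b) :
    ∫ x in Set.Ioi (0 : ℝ), Real.exp (-(b * x)) = b⁻¹ := by
  have h := integral_comp_mul_left_Ioi (fun x => Real.exp (-x)) 0 hb
  simp only [mul_zero, smul_eq_mul] at h
  rw [h, integral_exp_neg_Ioi_zero, mul_one]

lemma lintegral_exp_neg_mul {b c : ℝ} (hb : 0 < b) (hc : 0 ≤ c) :
    ∫⁻ x in Set.Ioi (0 : ℝ), ENNReal.ofReal (c * Real.exp (-(b * x))) =
      ENNReal.ofReal (c * b⁻¹) := by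
  have hint : IntegrableOn (fun x => c * Real.exp (-(b * x))) (Set.Ioi (0 : ℝ)) := by
    have := (exp_neg_integrableOn_Ioi 0 hb).const_mul c
    simpa [neg_mul, IntegrableOn] using this
  rw [← ofReal_integral_eq_lintegral_ofReal hint
    (Filter.Eventually.of_forall fun x => by positivity)]
  rw [integral_const_mul, exp_neg_mul_integral hb]

/-- Squared L² norm of the gradient of the explicit half-space Dirichlet
Helmholtz solution, computed via Plancherel, with the resulting bound in terms
of `|λ|`, `|ξ'|` and `|λ|⁻¹|ξ'|²`. -/
theorem halfspace_dirichlet_gradient_L2_norm (N : ℕ) (hN : 2 ≤ N)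
    (lam : ℝ) (hlam : lam ≠ 0)
    (ψ : EuclideanSpace ℝ (Fin (N - 1)) → ℂ) (hψ : MemLp ψ 2) :
    (∫⁻ ξ, ∫⁻ t in Set.Ioi (0 : ℝ),
        ENNReal.ofReal ((lam ^ 2 + 2 * ‖ξ‖ ^ 2) *
          Real.exp (-2 * t * Real.sqrt (lam ^ 2 + ‖ξ‖ ^ 2)) * ‖ψ ξ‖ ^ 2)) =
      (∫⁻ ξ, ENNReal.ofReal
        ((1 / 2) * ((lam ^ 2 + 2 * ‖ξ‖ ^ 2) * (lam ^ 2 + ‖ξ‖ ^ 2) ^ (-(1 : ℝ) / 2)) *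
          ‖ψ ξ‖ ^ 2)) ∧
    (∫⁻ ξ, ENNReal.ofReal
        ((1 / 2) * ((lam ^ 2 + 2 * ‖ξ‖ ^ 2) * (lam ^ 2 + ‖ξ‖ ^ 2) ^ (-(1 : ℝ) / 2)) *
          ‖ψ ξ‖ ^ 2)) ≤
      ENNReal.ofReal (1 / 2) *
        ∫⁻ ξ, ENNReal.ofReal ((|lam| + ‖ξ‖ + |lam|⁻¹ * ‖ξ‖ ^ 2) * ‖ψ ξ‖ ^ 2) := by
  have hlam2 : (0 : ℝ) < lam ^ 2 := by positivity
  constructor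
  · refine lintegral_congr fun ξ => ?_
    set r := ‖ξ‖ with hr
    have hr0 : 0 ≤ r := norm_nonneg _
    have hpos : (0 : ℝ) < lam ^ 2 + r ^ 2 := by positivity
    set s := Real.sqrt (lam ^ 2 + r ^ 2) with hs
    have hspos : 0 < s := Real.sqrt_pos.mpr hpos
    have h1 : ∀ t : ℝ, (lam ^ 2 + 2 * r ^ 2) * Real.exp (-2 * t * s) * ‖ψ ξ‖ ^ 2 =
        ((lam ^ 2 + 2 * r ^ 2) * ‖ψ ξ‖ ^ 2) * Real.exp (-(2 * s * t)) := by
      intro t; ring_nf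
    simp_rw [h1]
    rw [lintegral_exp_neg_mul (by positivity) (by positivity)]
    congr 1
    have hrpow : (lam ^ 2 + r ^ 2) ^ (-(1 : ℝ) / 2) = s⁻¹ := by
      rw [neg_div, Real.rpow_neg hpos.le, hs, Real.sqrt_eq_rpow]
    rw [hrpow]
    field_simp
  · rw [← lintegral_const_mul' _ _ (by simp)]
    refine lintegral_mono fun ξ => ?_
    set r := ‖ξ‖ with hr
    have hr0 : 0 ≤ r := norm_nonneg _
    have hpos : (0 : ℝ) < lam ^ 2 + r ^ 2 := by positivity
    set s := Real.sqrt (lam ^ 2 + r ^ 2) with hs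
    have hspos : 0 < s := Real.sqrt_pos.mpr hpos
    have hss : s ^ 2 = lam ^ 2 + r ^ 2 := Real.sq_sqrt hpos.le
    have hrpow : (lam ^ 2 + r ^ 2) ^ (-(1 : ℝ) / 2) = s⁻¹ := by
      rw [neg_div, Real.rpow_neg hpos.le, hs, Real.sqrt_eq_rpow]
    have habs : 0 < |lam| := abs_pos.mpr hlam
    -- s ≤ |lam| + r
    have hsle : s ≤ |lam| + r := by
      have : lam ^ 2 + r ^ 2 ≤ (|lam| + r) ^ 2 := by
        have := sq_abs lam
        nlinarith [mul_nonneg (abs_nonneg lam) hr0]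
      calc s ≤ Real.sqrt ((|lam| + r) ^ 2) := Real.sqrt_le_sqrt this
        _ = |lam| + r := Real.sqrt_sq (by positivity)
    -- |lam| ≤ s
    have hls : |lam| ≤ s := by
      rw [hs, ← Real.sqrt_sq_eq_abs]
      exact Real.sqrt_le_sqrt (by nlinarith)
    have hinv : s⁻¹ ≤ |lam|⁻¹ := inv_anti₀ habs hls
    have key : (lam ^ 2 + 2 * r ^ 2) * s⁻¹ ≤ |lam| + r + |lam|⁻¹ * r ^ 2 := by
      have hdecomp : (lam ^ 2 + 2 * r ^ 2) * s⁻¹ = s + r ^ 2 * s⁻¹ := by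
        have hsne : s ≠ 0 := hspos.ne'
        field_simp
        nlinarith [hss]
      rw [hdecomp]
      have h2 : r ^ 2 * s⁻¹ ≤ |lam|⁻¹ * r ^ 2 := by
        rw [mul_comm (|lam|⁻¹)]
        exact mul_le_mul_of_nonneg_left hinv (by positivity)
      linarith
    have hhalf : (0 : ℝ) ≤ 1 / 2 := by norm_num
    calc ENNReal.ofReal ((1 / 2) * ((lam ^ 2 + 2 * r ^ 2) *
          (lam ^ 2 + r ^ 2) ^ (-(1 : ℝ) / 2)) * ‖ψ ξ‖ ^ 2)
        = ENNReal.ofReal (1 / 2) *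
          ENNReal.ofReal (((lam ^ 2 + 2 * r ^ 2) * s⁻¹) * ‖ψ ξ‖ ^ 2) := by
          rw [hrpow, mul_assoc, ENNReal.ofReal_mul hhalf]
      _ ≤ ENNReal.ofReal (1 / 2) *
          ENNReal.ofReal ((|lam| + r + |lam|⁻¹ * r ^ 2) * ‖ψ ξ‖ ^ 2) := by
          gcongr
end

section
/- For every C₀ > 0 and ω > 0 there exists a constant C > 0, depending only on C₀ and ω, such that for all real λ ≥ ω and all nonnegative reals A, B, H satisfying A² + λB² ≤ C₀ (A^{1/2} B^{1/2} + B) H, one has λ^{3/4} B + λ^{1/4} A ≤ C H. -/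
set_option maxHeartbeats 1000000

/-- Real-number lemma behind Step 1 of the Neumann resolvent estimate:
from `A² + λB² ≤ C₀(A^{1/2}B^{1/2} + B)H` one gets
`λ^{3/4} B + λ^{1/4} A ≤ C H` with `C` depending only on `C₀` and `ω`. -/
theorem neumann_step1_lemma (C₀ ω : ℝ) (hC₀ : 0 < C₀) (hω : 0 < ω) :
    ∃ C > (0 : ℝ), ∀ lam A B H : ℝ, ω ≤ lam → 0 ≤ A → 0 ≤ B → 0 ≤ H →
      A ^ 2 + lam * B ^ 2 ≤ C₀ * (A ^ ((1 : ℝ) / 2) * B ^ ((1 : ℝ) / 2) + B) * H →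
      lam ^ ((3 : ℝ) / 4) * B + lam ^ ((1 : ℝ) / 4) * A ≤ C * H := by
  set s := ω ^ ((1 : ℝ) / 4) with hs
  have hs0 : 0 < s := Real.rpow_pos_of_pos hω _
  refine ⟨2 * C₀ * (1 + s⁻¹), by positivity, ?_⟩
  intro lam A B H hlam hA hB hH hmain
  have hlam0 : 0 < lam := hω.trans_le hlam
  set t := lam ^ ((1 : ℝ) / 4) with ht
  have ht0 : 0 < t := Real.rpow_pos_of_pos hlam0 _
  have hst : s ≤ t := Real.rpow_le_rpow hω.le hlam (by norm_num)
  set u := A ^ ((1 : ℝ) / 2) with hu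
  set v := B ^ ((1 : ℝ) / 2) with hv
  have hu0 : 0 ≤ u := Real.rpow_nonneg hA _
  have hv0 : 0 ≤ v := Real.rpow_nonneg hB _
  have hu2 : u ^ 2 = A := by
    rw [hu, ← Real.rpow_natCast (A ^ ((1:ℝ)/2)) 2, ← Real.rpow_mul hA]; norm_num
  have hv2 : v ^ 2 = B := by
    rw [hv, ← Real.rpow_natCast (B ^ ((1:ℝ)/2)) 2, ← Real.rpow_mul hB]; norm_num
  have ht4 : t ^ 4 = lam := by
    rw [ht, ← Real.rpow_natCast (lam ^ ((1:ℝ)/4)) 4, ← Real.rpow_mul hlam0.le]; norm_num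
  have ht3 : lam ^ ((3 : ℝ) / 4) = t ^ 3 := by
    rw [ht, ← Real.rpow_natCast (lam ^ ((1:ℝ)/4)) 3, ← Real.rpow_mul hlam0.le]; norm_num
  rw [ht3, ← hu2, ← hv2]
  rw [← hu2, ← hv2, ← ht4] at hmain
  -- now hmain : (u^2)^2 + t^4 * (v^2)^2 ≤ C₀ * (u * v + v^2) * H
  set S := t ^ 3 * v ^ 2 + t * u ^ 2 with hS
  have hS0 : 0 ≤ S := by positivity
  have hss : s * s⁻¹ = 1 := mul_inv_cancel₀ hs0.ne'
  -- step 1: S^2 ≤ 2 t^2 (u^4 + t^4 v^4)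
  have step1 : S ^ 2 ≤ 2 * t ^ 2 * ((u ^ 2) ^ 2 + t ^ 4 * (v ^ 2) ^ 2) := by
    nlinarith [sq_nonneg (t * u ^ 2 - t ^ 3 * v ^ 2)]
  -- step 2: 2 t^2 * C₀ * (u*v + v^2) * H ≤ C * H * S
  have amgm : 2 * (t ^ 2 * (u * v)) ≤ S := by
    nlinarith [mul_nonneg ht0.le (sq_nonneg (u - t * v))]
  have hv2t : s * (t ^ 2 * v ^ 2) ≤ t ^ 3 * v ^ 2 := by
    nlinarith [mul_nonneg (mul_nonneg ht0.le ht0.le) (sq_nonneg v)]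
  have key : S ^ 2 ≤ (2 * C₀ * (1 + s⁻¹)) * H * S := by
    have h2 : S ^ 2 ≤ 2 * t ^ 2 * (C₀ * (u * v + v ^ 2) * H) := by
      refine step1.trans ?_
      exact mul_le_mul_of_nonneg_left hmain (by positivity)
    have h3 : t ^ 2 * v ^ 2 ≤ s⁻¹ * S := by
      have : t ^ 2 * v ^ 2 ≤ s⁻¹ * (t ^ 3 * v ^ 2) := by
        rw [← mul_le_mul_iff_right₀ hs0]
        calc s * (t ^ 2 * v ^ 2) ≤ t ^ 3 * v ^ 2 := hv2t
          _ = s * (s⁻¹ * (t ^ 3 * v ^ 2)) := by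
              rw [← mul_assoc, hss, one_mul]
      refine this.trans ?_
      have : t ^ 3 * v ^ 2 ≤ S := by nlinarith [mul_nonneg ht0.le (sq_nonneg u)]
      exact mul_le_mul_of_nonneg_left this (inv_nonneg.mpr hs0.le)
    -- combine
    have hCH : 0 ≤ C₀ * H := mul_nonneg hC₀.le hH
    have e1 := mul_le_mul_of_nonneg_left amgm hCH
    have e2 := mul_le_mul_of_nonneg_left h3 hCH
    have e3 : 0 ≤ C₀ * H * S := mul_nonneg hCH hS0
    nlinarith [e1, e2, e3, h2]
  show S ≤ 2 * C₀ * (1 + s⁻¹) * H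
  rcases eq_or_lt_of_le hS0 with h0 | hpos
  · rw [← h0]; positivity
  · nlinarith [key]
end

section
/- For every C₀ > 0, ω > 0 and every real number r < 1/2, there exists a constant C_r > 0, depending only on C₀, ω and r, such that for all real λ ≥ ω and all nonnegative reals A, B, G, H satisfying (i) A² + λB² ≤ C₀ G H, (ii) G ≤ C₀ (A^{1/2} B^{1/2} + B), and (iii) λ² B² ≤ A² + G H, one has λ^{3r} B + λ^{r} A + λ^{2r} G ≤ C_r H. -/
open Real

private lemma rpow_split {lam : ℝ} (hl : 0 < lam) {x y z : ℝ} (h : x + y = z) :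
    lam ^ z = lam ^ x * lam ^ y := by rw [← h, Real.rpow_add hl]

private lemma le_of_sq_le_sq'' {a b : ℝ} (ha : 0 ≤ a) (hb : 0 ≤ b) (h : a ^ 2 ≤ b ^ 2) :
    a ≤ b := by nlinarith

/-- From a bound `G ≤ c · λ^(-e) · H` and inequalities (i), (iii) we deduce bounds on `A`, `B`. -/
private lemma AB_of_G {C₀ ω lam A B G H c e : ℝ} (hC₀ : 0 < C₀) (hω : 0 < ω)
    (hlam : ω ≤ lam) (hc : 0 ≤ c)
    (hA : 0 ≤ A) (hB : 0 ≤ B) (hG : 0 ≤ G) (hH : 0 ≤ H)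
    (h1 : A ^ 2 + lam * B ^ 2 ≤ C₀ * G * H)
    (h3 : lam ^ 2 * B ^ 2 ≤ A ^ 2 + G * H)
    (hGb : G ≤ c * lam ^ (-e) * H) :
    A ≤ Real.sqrt (C₀ * c) * lam ^ (-(e / 2)) * H ∧
      B ≤ Real.sqrt ((C₀ + 1) * c) * lam ^ (-(e / 2) - 1) * H := by
  have hl : 0 < lam := hω.trans_le hlam
  have ht : (0 : ℝ) < lam ^ (-(e / 2)) := Real.rpow_pos_of_pos hl _
  have h2s : lam ^ (-e) = lam ^ (-(e / 2)) * lam ^ (-(e / 2)) :=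
    rpow_split hl (by ring)
  set t := lam ^ (-(e / 2)) with htdef
  have hGH : G * H ≤ c * (t ^ 2) * H ^ 2 := by
    have h5 := mul_le_mul_of_nonneg_right hGb hH
    rw [h2s] at h5
    nlinarith [h5]
  have hA2 : A ^ 2 ≤ C₀ * c * t ^ 2 * H ^ 2 := by
    have h4 := mul_le_mul_of_nonneg_left hGH hC₀.le
    nlinarith [mul_nonneg hl.le (sq_nonneg B)]
  have hAb : A ≤ Real.sqrt (C₀ * c) * t * H := by
    apply le_of_sq_le_sq'' hA (by positivity)
    have hsq : (Real.sqrt (C₀ * c) * t * H) ^ 2 = C₀ * c * t ^ 2 * H ^ 2 := by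
      rw [mul_pow, mul_pow, Real.sq_sqrt (by positivity)]
    rw [hsq]; exact hA2
  refine ⟨hAb, ?_⟩
  have hB2 : (lam * B) ^ 2 ≤ (C₀ + 1) * c * t ^ 2 * H ^ 2 := by
    have : lam ^ 2 * B ^ 2 ≤ C₀ * c * t ^ 2 * H ^ 2 + c * t ^ 2 * H ^ 2 := by
      nlinarith
    nlinarith [this]
  have hlB : lam * B ≤ Real.sqrt ((C₀ + 1) * c) * t * H := by
    apply le_of_sq_le_sq'' (by positivity) (by positivity)
    have hsq : (Real.sqrt ((C₀ + 1) * c) * t * H) ^ 2 = (C₀ + 1) * c * t ^ 2 * H ^ 2 := by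
      rw [mul_pow, mul_pow, Real.sq_sqrt (by positivity)]
    rw [hsq]; exact hB2
  have hrw : lam ^ (-(e / 2) - 1) = t * lam⁻¹ := by
    rw [htdef, ← Real.rpow_neg_one lam]
    exact rpow_split hl (by ring)
  rw [hrw]
  have h7 := mul_le_mul_of_nonneg_left hlB (inv_nonneg.2 hl.le)
  rw [inv_mul_cancel_left₀ hl.ne'] at h7
  calc B ≤ lam⁻¹ * (Real.sqrt ((C₀ + 1) * c) * t * H) := h7
    _ = Real.sqrt ((C₀ + 1) * c) * (t * lam⁻¹) * H := by ring

set_option maxHeartbeats 1000000 in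
/-- The iterated bound: `G ≤ c_n · λ^{-(1 - 2^{-n})} · H`. -/
private lemma neumann_key (C₀ ω : ℝ) (hC₀ : 0 < C₀) (hω : 0 < ω) :
    ∀ n : ℕ, ∃ c > (0 : ℝ), ∀ lam A B G H : ℝ, ω ≤ lam →
      0 ≤ A → 0 ≤ B → 0 ≤ G → 0 ≤ H →
      A ^ 2 + lam * B ^ 2 ≤ C₀ * G * H →
      G ≤ C₀ * (A ^ ((1 : ℝ) / 2) * B ^ ((1 : ℝ) / 2) + B) →
      lam ^ 2 * B ^ 2 ≤ A ^ 2 + G * H →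
      G ≤ c * lam ^ (-(1 - ((2 : ℝ)⁻¹) ^ n)) * H := by
  intro n
  induction n with
  | zero =>
    -- base case: exponent is 0, so we need G ≤ c * H
    refine ⟨(C₀ * (Real.sqrt (Real.sqrt C₀ * Real.sqrt (C₀ / ω)) + Real.sqrt (C₀ / ω))) ^ 2
        + 1, by positivity, ?_⟩
    intro lam A B G H hlam hA hB hG hH h1 h2 h3
    have hl : 0 < lam := hω.trans_le hlam
    simp only [pow_zero]
    rw [show -(1 - (1 : ℝ)) = (0 : ℝ) by ring, Real.rpow_zero, mul_one]
    set x := Real.sqrt G with hx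
    set y := Real.sqrt H with hy
    have hxG : x ^ 2 = G := Real.sq_sqrt hG
    have hyH : y ^ 2 = H := Real.sq_sqrt hH
    have hx0 : 0 ≤ x := Real.sqrt_nonneg _
    have hy0 : 0 ≤ y := Real.sqrt_nonneg _
    -- A ≤ √C₀ x y,  B ≤ √(C₀/ω) x y
    have hAb : A ≤ Real.sqrt C₀ * (x * y) := by
      apply le_of_sq_le_sq'' hA (by positivity)
      have : (Real.sqrt C₀ * (x * y)) ^ 2 = C₀ * (G * H) := by
        rw [mul_pow, mul_pow, Real.sq_sqrt hC₀.le, hxG, hyH]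
      rw [this]; nlinarith [mul_nonneg hl.le (sq_nonneg B)]
    have hBb : B ≤ Real.sqrt (C₀ / ω) * (x * y) := by
      apply le_of_sq_le_sq'' hB (by positivity)
      have : (Real.sqrt (C₀ / ω) * (x * y)) ^ 2 = C₀ / ω * (G * H) := by
        rw [mul_pow, mul_pow, Real.sq_sqrt (by positivity), hxG, hyH]
      rw [this]
      -- ω B² ≤ λ B² ≤ C₀ G H
      have h5 : ω * B ^ 2 ≤ C₀ * G * H := by
        nlinarith [mul_le_mul_of_nonneg_right hlam (sq_nonneg B), sq_nonneg A]
      rw [div_mul_eq_mul_div, le_div_iff₀ hω]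
      nlinarith [h5]
    -- √A √B ≤ √(√C₀ √(C₀/ω)) x y
    have hsAB : A ^ ((1 : ℝ) / 2) * B ^ ((1 : ℝ) / 2)
        ≤ Real.sqrt (Real.sqrt C₀ * Real.sqrt (C₀ / ω)) * (x * y) := by
      rw [← Real.sqrt_eq_rpow, ← Real.sqrt_eq_rpow, ← Real.sqrt_mul hA]
      have hABle : A * B ≤ Real.sqrt C₀ * Real.sqrt (C₀ / ω) * (x * y) ^ 2 := by
        have := mul_le_mul hAb hBb hB (by positivity)
        nlinarith [this]
      calc Real.sqrt (A * B)
          ≤ Real.sqrt (Real.sqrt C₀ * Real.sqrt (C₀ / ω) * (x * y) ^ 2) :=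
            Real.sqrt_le_sqrt hABle
        _ = Real.sqrt (Real.sqrt C₀ * Real.sqrt (C₀ / ω)) * (x * y) := by
            rw [Real.sqrt_mul (by positivity), Real.sqrt_sq (by positivity)]
    -- conclude G ≤ D x y with D := C₀ (… + …)
    set D := C₀ * (Real.sqrt (Real.sqrt C₀ * Real.sqrt (C₀ / ω)) + Real.sqrt (C₀ / ω)) with hD
    have hD0 : 0 ≤ D := by positivity
    have hGD : G ≤ D * (x * y) := by
      calc G ≤ C₀ * (A ^ ((1 : ℝ) / 2) * B ^ ((1 : ℝ) / 2) + B) := h2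
        _ ≤ C₀ * (Real.sqrt (Real.sqrt C₀ * Real.sqrt (C₀ / ω)) * (x * y)
              + Real.sqrt (C₀ / ω) * (x * y)) := by
            apply mul_le_mul_of_nonneg_left (by linarith) hC₀.le
        _ = D * (x * y) := by rw [hD]; ring
    -- G = x², H = y², so x² ≤ D x y gives x² ≤ D² y²
    have : G ≤ D ^ 2 * H := by
      rw [← hxG] at hGD
      rw [← hxG, ← hyH]
      nlinarith [sq_nonneg (x - D * y), hGD]
    nlinarith [this, hH]
  | succ n ih =>
    obtain ⟨c, hc, ih⟩ := ih
    set e : ℝ := 1 - ((2 : ℝ)⁻¹) ^ n with he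
    have hee : (1 : ℝ) - ((2 : ℝ)⁻¹) ^ (n + 1) = e / 2 + 1 / 2 := by
      rw [he]; rw [pow_succ]; ring
    set a := Real.sqrt (C₀ * c) with ha
    set b := Real.sqrt ((C₀ + 1) * c) with hb
    refine ⟨C₀ * (Real.sqrt (a * b) + b * ω ^ (-(1 : ℝ) / 2)), by positivity, ?_⟩
    intro lam A B G H hlam hA hB hG hH h1 h2 h3
    have hl : 0 < lam := hω.trans_le hlam
    obtain ⟨hAb, hBb⟩ := AB_of_G hC₀ hω hlam hc.le hA hB hG hH h1 h3
      (ih lam A B G H hlam hA hB hG hH h1 h2 h3)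
    rw [← ha] at hAb
    rw [← hb] at hBb
    set t := lam ^ (-(e / 2)) with ht
    have ht0 : 0 < t := Real.rpow_pos_of_pos hl _
    -- the new exponent
    have hnew : -(1 - ((2 : ℝ)⁻¹) ^ (n + 1)) = -(e / 2) + -(1 / 2 : ℝ) := by
      rw [hee]; ring
    have hlam12 : (0 : ℝ) < lam ^ (-(1 / 2) : ℝ) := Real.rpow_pos_of_pos hl _
    have hsplit : lam ^ (-(1 - ((2 : ℝ)⁻¹) ^ (n + 1))) = t * lam ^ (-(1 / 2) : ℝ) := by
      rw [ht]; exact rpow_split hl (by rw [← hnew])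
    -- bound √A √B
    have hsAB : A ^ ((1 : ℝ) / 2) * B ^ ((1 : ℝ) / 2)
        ≤ Real.sqrt (a * b) * (t * lam ^ (-(1 / 2) : ℝ)) * H := by
      rw [← Real.sqrt_eq_rpow, ← Real.sqrt_eq_rpow, ← Real.sqrt_mul hA]
      have ha0 : 0 ≤ a := Real.sqrt_nonneg _
      have hb0 : 0 ≤ b := Real.sqrt_nonneg _
      have hABle : A * B ≤ a * b * (t * lam ^ (-(1 / 2) : ℝ)) ^ 2 * H ^ 2 := by
        have h6 := mul_le_mul hAb hBb hB (by positivity)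
        have hexp : lam ^ (-(e / 2) - 1)
            = lam ^ (-(e / 2)) * (lam ^ (-(1 / 2) : ℝ) * lam ^ (-(1 / 2) : ℝ)) := by
          rw [← Real.rpow_add hl]
          exact rpow_split hl (by ring)
        rw [hexp, ← ht] at h6
        nlinarith [h6]
      calc Real.sqrt (A * B)
          ≤ Real.sqrt (a * b * (t * lam ^ (-(1 / 2) : ℝ)) ^ 2 * H ^ 2) :=
            Real.sqrt_le_sqrt hABle
        _ = Real.sqrt (a * b) * (t * lam ^ (-(1 / 2) : ℝ)) * H := by
            rw [Real.sqrt_mul (by positivity), Real.sqrt_mul (by positivity),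
              Real.sqrt_sq (by positivity), Real.sqrt_sq hH]
            all_goals ring
    -- bound B: λ^{-(e/2)-1} = t λ^{-1/2} λ^{-1/2} ≤ t λ^{-1/2} ω^{-1/2}
    have hBb2 : B ≤ b * ω ^ (-(1 : ℝ) / 2) * (t * lam ^ (-(1 / 2) : ℝ)) * H := by
      have hb0 : 0 ≤ b := Real.sqrt_nonneg _
      have hmon : lam ^ (-(1 / 2) : ℝ) ≤ ω ^ (-(1 / 2) : ℝ) :=
        Real.rpow_le_rpow_of_nonpos hω hlam (by norm_num)
      have hexp : lam ^ (-(e / 2) - 1)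
          = t * lam ^ (-(1 / 2) : ℝ) * lam ^ (-(1 / 2) : ℝ) := by
        rw [ht, ← Real.rpow_add hl, ← Real.rpow_add hl]
        all_goals (congr 1 <;> ring)
      rw [hexp] at hBb
      calc B ≤ b * (t * lam ^ (-(1 / 2) : ℝ) * lam ^ (-(1 / 2) : ℝ)) * H := hBb
        _ ≤ b * (t * lam ^ (-(1 / 2) : ℝ) * ω ^ (-(1 / 2) : ℝ)) * H := by
            apply mul_le_mul_of_nonneg_right _ hH
            apply mul_le_mul_of_nonneg_left _ hb0
            exact mul_le_mul_of_nonneg_left hmon (by positivity)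
        _ = b * ω ^ (-(1 : ℝ) / 2) * (t * lam ^ (-(1 / 2) : ℝ)) * H := by
            rw [show (-(1 : ℝ) / 2) = (-(1 / 2) : ℝ) by norm_num]; ring
    rw [hsplit]
    calc G ≤ C₀ * (A ^ ((1 : ℝ) / 2) * B ^ ((1 : ℝ) / 2) + B) := h2
      _ ≤ C₀ * (Real.sqrt (a * b) * (t * lam ^ (-(1 / 2) : ℝ)) * H
            + b * ω ^ (-(1 : ℝ) / 2) * (t * lam ^ (-(1 / 2) : ℝ)) * H) :=
          mul_le_mul_of_nonneg_left (by linarith) hC₀.le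
      _ = C₀ * (Real.sqrt (a * b) + b * ω ^ (-(1 : ℝ) / 2))
            * (t * lam ^ (-(1 / 2) : ℝ)) * H := by ring

/-- Iteration lemma behind the Neumann resolvent boundary estimate: for every
`r < 1/2` there is `C_r` such that the three inequalities (energy, trace
interpolation, modulus of the energy identity) imply
`λ^{3r} B + λ^{r} A + λ^{2r} G ≤ C_r H`. -/
theorem neumann_iteration_lemma (C₀ ω r : ℝ) (hC₀ : 0 < C₀) (hω : 0 < ω)
    (hr : r < 1 / 2) :
    ∃ C > (0 : ℝ), ∀ lam A B G H : ℝ, ω ≤ lam →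
      0 ≤ A → 0 ≤ B → 0 ≤ G → 0 ≤ H →
      A ^ 2 + lam * B ^ 2 ≤ C₀ * G * H →
      G ≤ C₀ * (A ^ ((1 : ℝ) / 2) * B ^ ((1 : ℝ) / 2) + B) →
      lam ^ 2 * B ^ 2 ≤ A ^ 2 + G * H →
      lam ^ (3 * r) * B + lam ^ r * A + lam ^ (2 * r) * G ≤ C * H := by
  -- choose n with (1/2)^n ≤ 1 - 2r
  obtain ⟨n, hn⟩ : ∃ n : ℕ, ((2 : ℝ)⁻¹) ^ n < 1 - 2 * r := by
    apply exists_pow_lt_of_lt_one (by linarith) (by norm_num)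
  obtain ⟨c, hc, hkey⟩ := neumann_key C₀ ω hC₀ hω n
  set e : ℝ := 1 - ((2 : ℝ)⁻¹) ^ n with he
  have hepos : 0 ≤ e := by
    have h8 : ((2 : ℝ)⁻¹) ^ n ≤ 1 := pow_le_one₀ (by norm_num) (by norm_num)
    rw [he]; linarith
  have hre : 2 * r ≤ e := by rw [he]; linarith
  set a := Real.sqrt (C₀ * c) with ha
  set b := Real.sqrt ((C₀ + 1) * c) with hb
  refine ⟨b * ω ^ (3 * r - e / 2 - 1) + a * ω ^ (r - e / 2) + c * ω ^ (2 * r - e),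
    by positivity, ?_⟩
  intro lam A B G H hlam hA hB hG hH h1 h2 h3
  have hl : 0 < lam := hω.trans_le hlam
  have hGb := hkey lam A B G H hlam hA hB hG hH h1 h2 h3
  obtain ⟨hAb, hBb⟩ := AB_of_G hC₀ hω hlam hc.le hA hB hG hH h1 h3 hGb
  rw [← ha] at hAb
  rw [← hb] at hBb
  have hb0 : 0 ≤ b := Real.sqrt_nonneg _
  have ha0 : 0 ≤ a := Real.sqrt_nonneg _
  -- each of the three terms
  have hBterm : lam ^ (3 * r) * B ≤ b * ω ^ (3 * r - e / 2 - 1) * H := by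
    have h6 : lam ^ (3 * r) * B ≤ lam ^ (3 * r) * (b * lam ^ (-(e / 2) - 1) * H) :=
      mul_le_mul_of_nonneg_left hBb (Real.rpow_pos_of_pos hl _).le
    have hexp : lam ^ (3 * r) * lam ^ (-(e / 2) - 1) = lam ^ (3 * r - e / 2 - 1) := by
      rw [← Real.rpow_add hl]
      all_goals (congr 1 <;> ring)
    have hm : lam ^ (3 * r - e / 2 - 1) ≤ ω ^ (3 * r - e / 2 - 1) :=
      Real.rpow_le_rpow_of_nonpos hω hlam (by linarith)
    calc lam ^ (3 * r) * B ≤ lam ^ (3 * r) * (b * lam ^ (-(e / 2) - 1) * H) := h6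
      _ = b * (lam ^ (3 * r) * lam ^ (-(e / 2) - 1)) * H := by ring
      _ = b * lam ^ (3 * r - e / 2 - 1) * H := by rw [hexp]
      _ ≤ b * ω ^ (3 * r - e / 2 - 1) * H := by
          apply mul_le_mul_of_nonneg_right _ hH
          exact mul_le_mul_of_nonneg_left hm hb0
  have hAterm : lam ^ r * A ≤ a * ω ^ (r - e / 2) * H := by
    have h6 : lam ^ r * A ≤ lam ^ r * (a * lam ^ (-(e / 2)) * H) :=
      mul_le_mul_of_nonneg_left hAb (Real.rpow_pos_of_pos hl _).le
    have hexp : lam ^ r * lam ^ (-(e / 2)) = lam ^ (r - e / 2) := by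
      rw [← Real.rpow_add hl]
      all_goals (congr 1 <;> ring)
    have hm : lam ^ (r - e / 2) ≤ ω ^ (r - e / 2) :=
      Real.rpow_le_rpow_of_nonpos hω hlam (by linarith)
    calc lam ^ r * A ≤ lam ^ r * (a * lam ^ (-(e / 2)) * H) := h6
      _ = a * (lam ^ r * lam ^ (-(e / 2))) * H := by ring
      _ = a * lam ^ (r - e / 2) * H := by rw [hexp]
      _ ≤ a * ω ^ (r - e / 2) * H := by
          apply mul_le_mul_of_nonneg_right _ hH
          exact mul_le_mul_of_nonneg_left hm ha0
  have hGterm : lam ^ (2 * r) * G ≤ c * ω ^ (2 * r - e) * H := by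
    have h6 : lam ^ (2 * r) * G ≤ lam ^ (2 * r) * (c * lam ^ (-e) * H) :=
      mul_le_mul_of_nonneg_left hGb (Real.rpow_pos_of_pos hl _).le
    have hexp : lam ^ (2 * r) * lam ^ (-e) = lam ^ (2 * r - e) := by
      rw [← Real.rpow_add hl]
      all_goals (congr 1 <;> ring)
    have hm : lam ^ (2 * r - e) ≤ ω ^ (2 * r - e) :=
      Real.rpow_le_rpow_of_nonpos hω hlam (by linarith)
    calc lam ^ (2 * r) * G ≤ lam ^ (2 * r) * (c * lam ^ (-e) * H) := h6
      _ = c * (lam ^ (2 * r) * lam ^ (-e)) * H := by ring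
      _ = c * lam ^ (2 * r - e) * H := by rw [hexp]
      _ ≤ c * ω ^ (2 * r - e) * H := by
          apply mul_le_mul_of_nonneg_right _ hH
          exact mul_le_mul_of_nonneg_left hm hc.le
  linarith
end

section
/- For every ω > 0 and every real number r < 1, there exists a constant C_r > 0, depending only on ω and r, such that for all real λ ≥ ω and all nonnegative reals A, B, K satisfying (i) λ B² + A² ≤ K A^{1/2} B^{1/2} and (ii) λ² B² ≤ A² + K A^{1/2} B^{1/2}, one has λ^{3r/2} B + λ^{r/2} A ≤ C_r K. -/
/-- Iteration lemma for the complex-λ Dirichlet interior estimate with weighted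
datum: for every `r < 1`, the two inequalities imply
`λ^{3r/2} B + λ^{r/2} A ≤ C_r K`. -/
theorem dirichlet_weighted_iteration_lemma (ω r : ℝ) (hω : 0 < ω) (hr : r < 1) :
    ∃ C > (0 : ℝ), ∀ lam A B K : ℝ, ω ≤ lam → 0 ≤ A → 0 ≤ B → 0 ≤ K →
      lam * B ^ 2 + A ^ 2 ≤ K * (A ^ ((1 : ℝ) / 2) * B ^ ((1 : ℝ) / 2)) →
      lam ^ 2 * B ^ 2 ≤ A ^ 2 + K * (A ^ ((1 : ℝ) / 2) * B ^ ((1 : ℝ) / 2)) →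
      lam ^ (3 * r / 2) * B + lam ^ (r / 2) * A ≤ C * K := by
  refine ⟨(2 : ℝ) ^ ((3 : ℝ) / 4) * ω ^ (3 * (r - 1) / 2)
      + (2 : ℝ) ^ ((1 : ℝ) / 4) * ω ^ ((r - 1) / 2), by positivity, ?_⟩
  intro lam A B K hlam hA hB hK h1 h2
  have hlam0 : (0 : ℝ) < lam := lt_of_lt_of_le hω hlam
  have hCK : 0 ≤ ((2 : ℝ) ^ ((3 : ℝ) / 4) * ω ^ (3 * (r - 1) / 2)
      + (2 : ℝ) ^ ((1 : ℝ) / 4) * ω ^ ((r - 1) / 2)) * K := by positivity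
  have hzero : (0 : ℝ) ^ ((1 : ℝ) / 2) = 0 := Real.zero_rpow (by norm_num)
  -- degenerate cases: A = 0 or B = 0 forces A = B = 0
  rcases eq_or_lt_of_le hA with hA0 | hA0
  · rw [← hA0, hzero] at h1
    have hB0 : B = 0 := by
      by_contra hne
      have hBpos : 0 < B := lt_of_le_of_ne hB (Ne.symm hne)
      nlinarith [mul_pos hlam0 (mul_pos hBpos hBpos)]
    rw [← hA0, hB0]
    simpa using hCK
  rcases eq_or_lt_of_le hB with hB0 | hB0
  · rw [← hB0, hzero] at h1
    have hA0' : A = 0 := by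
      by_contra hne
      have hApos : 0 < A := lt_of_le_of_ne hA (Ne.symm hne)
      nlinarith [mul_pos hApos hApos]
    rw [← hB0, hA0']
    simpa using hCK
  -- main case: A > 0, B > 0
  set S : ℝ := A ^ ((1 : ℝ) / 2) * B ^ ((1 : ℝ) / 2) with hSdef
  have hSpos : 0 < S := by positivity
  have hAsq : (A ^ ((1 : ℝ) / 2)) ^ (2 : ℕ) = A := by
    rw [← Real.rpow_natCast (A ^ ((1 : ℝ) / 2)) 2, ← Real.rpow_mul hA]
    norm_num
  have hBsq : (B ^ ((1 : ℝ) / 2)) ^ (2 : ℕ) = B := by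
    rw [← Real.rpow_natCast (B ^ ((1 : ℝ) / 2)) 2, ← Real.rpow_mul hB]
    norm_num
  have hSsq : S ^ 2 = A * B := by
    rw [hSdef, mul_pow, hAsq, hBsq]
  have hKS1 : A ^ 2 ≤ K * S := by nlinarith [mul_nonneg hlam0.le (sq_nonneg B)]
  have hKS3 : lam ^ 2 * B ^ 2 ≤ 2 * (K * S) := by nlinarith
  have hKSnn : 0 ≤ K * S := le_trans (sq_nonneg A) hKS1
  have hABpos : 0 < A * B := mul_pos hA0 hB0
  -- lam^2 * (A*B) ≤ 2 * K^2
  have hmul := mul_le_mul hKS3 hKS1 (sq_nonneg A) (by linarith : (0:ℝ) ≤ 2 * (K * S))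
  have h4' : (lam ^ 2 * (A * B)) * (A * B) ≤ (2 * K ^ 2) * (A * B) := by
    calc (lam ^ 2 * (A * B)) * (A * B) = lam ^ 2 * B ^ 2 * A ^ 2 := by ring
      _ ≤ 2 * (K * S) * (K * S) := hmul
      _ = 2 * K ^ 2 * S ^ 2 := by ring
      _ = (2 * K ^ 2) * (A * B) := by rw [hSsq]
  have h5 : lam ^ 2 * (A * B) ≤ 2 * K ^ 2 := le_of_mul_le_mul_right h4' hABpos
  -- fourth-power bounds
  have hA4 : A ^ 4 ≤ K ^ 2 * (A * B) := by
    calc A ^ 4 = (A ^ 2) ^ 2 := by ring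
      _ ≤ (K * S) ^ 2 := pow_le_pow_left₀ (sq_nonneg A) hKS1 2
      _ = K ^ 2 * S ^ 2 := by ring
      _ = K ^ 2 * (A * B) := by rw [hSsq]
  have haux1 : lam ^ 2 * A ^ 4 ≤ 2 * K ^ 4 := by
    calc lam ^ 2 * A ^ 4 ≤ lam ^ 2 * (K ^ 2 * (A * B)) :=
          mul_le_mul_of_nonneg_left hA4 (by positivity)
      _ = K ^ 2 * (lam ^ 2 * (A * B)) := by ring
      _ ≤ K ^ 2 * (2 * K ^ 2) := mul_le_mul_of_nonneg_left h5 (sq_nonneg K)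
      _ = 2 * K ^ 4 := by ring
  have hB4 : lam ^ 4 * B ^ 4 ≤ 4 * K ^ 2 * (A * B) := by
    calc lam ^ 4 * B ^ 4 = (lam ^ 2 * B ^ 2) ^ 2 := by ring
      _ ≤ (2 * (K * S)) ^ 2 := pow_le_pow_left₀ (by positivity) hKS3 2
      _ = 4 * K ^ 2 * S ^ 2 := by ring
      _ = 4 * K ^ 2 * (A * B) := by rw [hSsq]
  have haux2 : lam ^ 6 * B ^ 4 ≤ 8 * K ^ 4 := by
    calc lam ^ 6 * B ^ 4 = lam ^ 2 * (lam ^ 4 * B ^ 4) := by ring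
      _ ≤ lam ^ 2 * (4 * K ^ 2 * (A * B)) := mul_le_mul_of_nonneg_left hB4 (by positivity)
      _ = 4 * K ^ 2 * (lam ^ 2 * (A * B)) := by ring
      _ ≤ 4 * K ^ 2 * (2 * K ^ 2) := mul_le_mul_of_nonneg_left h5 (by positivity)
      _ = 8 * K ^ 4 := by ring
  -- base-monotonicity in lam for negative exponents
  have hmono1 : lam ^ (2 * r - 2) ≤ ω ^ (2 * r - 2) :=
    Real.rpow_le_rpow_of_nonpos hω hlam (by linarith)
  have hmono2 : lam ^ (6 * r - 6) ≤ ω ^ (6 * r - 6) :=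
    Real.rpow_le_rpow_of_nonpos hω hlam (by linarith)
  have h40 : (4 : ℕ) ≠ 0 := by norm_num
  -- bound each term via 4th powers
  have term2 : lam ^ (r / 2) * A ≤ (2 : ℝ) ^ ((1 : ℝ) / 4) * ω ^ ((r - 1) / 2) * K := by
    refine le_of_pow_le_pow_left₀ h40 (by positivity) ?_
    have e1 : (lam ^ (r / 2) * A) ^ (4 : ℕ) = lam ^ (2 * r) * A ^ 4 := by
      rw [mul_pow, ← Real.rpow_natCast (lam ^ (r / 2)) 4, ← Real.rpow_mul hlam0.le,
        show r / 2 * ((4 : ℕ) : ℝ) = 2 * r by push_cast; ring]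
    have e2 : ((2 : ℝ) ^ ((1 : ℝ) / 4) * ω ^ ((r - 1) / 2) * K) ^ (4 : ℕ)
        = 2 * ω ^ (2 * r - 2) * K ^ 4 := by
      rw [mul_pow, mul_pow, ← Real.rpow_natCast ((2:ℝ) ^ ((1:ℝ)/4)) 4,
        ← Real.rpow_mul (by norm_num : (0:ℝ) ≤ 2),
        ← Real.rpow_natCast (ω ^ ((r - 1) / 2)) 4, ← Real.rpow_mul hω.le,
        show (1 : ℝ) / 4 * ((4 : ℕ) : ℝ) = 1 by push_cast; ring,
        show (r - 1) / 2 * ((4 : ℕ) : ℝ) = 2 * r - 2 by push_cast; ring,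
        Real.rpow_one]
    rw [e1, e2]
    have e3 : lam ^ (2 * r) = lam ^ (2 * r - 2) * lam ^ (2 : ℕ) := by
      rw [← Real.rpow_natCast lam 2, ← Real.rpow_add hlam0]
      norm_num
    calc lam ^ (2 * r) * A ^ 4 = lam ^ (2 * r - 2) * (lam ^ (2 : ℕ) * A ^ 4) := by
          rw [e3]; ring
      _ ≤ lam ^ (2 * r - 2) * (2 * K ^ 4) :=
          mul_le_mul_of_nonneg_left haux1 (Real.rpow_nonneg hlam0.le _)
      _ ≤ ω ^ (2 * r - 2) * (2 * K ^ 4) :=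
          mul_le_mul_of_nonneg_right hmono1 (by positivity)
      _ = 2 * ω ^ (2 * r - 2) * K ^ 4 := by ring
  have term1 : lam ^ (3 * r / 2) * B ≤ (2 : ℝ) ^ ((3 : ℝ) / 4) * ω ^ (3 * (r - 1) / 2) * K := by
    refine le_of_pow_le_pow_left₀ h40 (by positivity) ?_
    have e1 : (lam ^ (3 * r / 2) * B) ^ (4 : ℕ) = lam ^ (6 * r) * B ^ 4 := by
      rw [mul_pow, ← Real.rpow_natCast (lam ^ (3 * r / 2)) 4, ← Real.rpow_mul hlam0.le,
        show 3 * r / 2 * ((4 : ℕ) : ℝ) = 6 * r by push_cast; ring]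
    have e2 : ((2 : ℝ) ^ ((3 : ℝ) / 4) * ω ^ (3 * (r - 1) / 2) * K) ^ (4 : ℕ)
        = 8 * ω ^ (6 * r - 6) * K ^ 4 := by
      rw [mul_pow, mul_pow, ← Real.rpow_natCast ((2:ℝ) ^ ((3:ℝ)/4)) 4,
        ← Real.rpow_mul (by norm_num : (0:ℝ) ≤ 2),
        ← Real.rpow_natCast (ω ^ (3 * (r - 1) / 2)) 4, ← Real.rpow_mul hω.le,
        show (3 : ℝ) / 4 * ((4 : ℕ) : ℝ) = 3 by push_cast; ring,
        show 3 * (r - 1) / 2 * ((4 : ℕ) : ℝ) = 6 * r - 6 by push_cast; ring]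
      norm_num
    rw [e1, e2]
    have e3 : lam ^ (6 * r) = lam ^ (6 * r - 6) * lam ^ (6 : ℕ) := by
      rw [← Real.rpow_natCast lam 6, ← Real.rpow_add hlam0]
      norm_num
    calc lam ^ (6 * r) * B ^ 4 = lam ^ (6 * r - 6) * (lam ^ (6 : ℕ) * B ^ 4) := by
          rw [e3]; ring
      _ ≤ lam ^ (6 * r - 6) * (8 * K ^ 4) :=
          mul_le_mul_of_nonneg_left haux2 (Real.rpow_nonneg hlam0.le _)
      _ ≤ ω ^ (6 * r - 6) * (8 * K ^ 4) :=
          mul_le_mul_of_nonneg_right hmono2 (by positivity)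
      _ = 8 * ω ^ (6 * r - 6) * K ^ 4 := by ring
  calc lam ^ (3 * r / 2) * B + lam ^ (r / 2) * A
      ≤ (2 : ℝ) ^ ((3 : ℝ) / 4) * ω ^ (3 * (r - 1) / 2) * K
        + (2 : ℝ) ^ ((1 : ℝ) / 4) * ω ^ ((r - 1) / 2) * K := add_le_add term1 term2
    _ = ((2 : ℝ) ^ ((3 : ℝ) / 4) * ω ^ (3 * (r - 1) / 2)
        + (2 : ℝ) ^ ((1 : ℝ) / 4) * ω ^ ((r - 1) / 2)) * K := by ring
end

section
/- For every ω > 0 and every real number r < 1, there exists a constant C_r > 0, depending only on ω and r, such that for all real λ ≥ ω and all nonnegative reals A, B, K satisfying (i) λ B² + A² ≤ K B and (ii) λ² B² ≤ A² + K B, one has λ^{2r} B + λ^{r} A ≤ C_r K. -/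
/-- Iteration lemma for the complex-λ Dirichlet interior estimate with
`F ∈ L²`: for every `r < 1`, the two inequalities imply
`λ^{2r} B + λ^{r} A ≤ C_r K`. -/
theorem dirichlet_L2_iteration_lemma (ω r : ℝ) (hω : 0 < ω) (hr : r < 1) :
    ∃ C > (0 : ℝ), ∀ lam A B K : ℝ, ω ≤ lam → 0 ≤ A → 0 ≤ B → 0 ≤ K →
      lam * B ^ 2 + A ^ 2 ≤ K * B →
      lam ^ 2 * B ^ 2 ≤ A ^ 2 + K * B →
      lam ^ (2 * r) * B + lam ^ r * A ≤ C * K := by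
  refine ⟨2 * ω ^ (2 * r - 2) + 2 * ω ^ (r - 1), by positivity, ?_⟩
  intro lam A B K hlam hA hB hK h1 h2
  have hlam0 : 0 < lam := lt_of_lt_of_le hω hlam
  -- A² ≤ K B
  have hAKB : A ^ 2 ≤ K * B := by nlinarith
  -- λ² B ≤ 2 K
  have hB2 : lam ^ 2 * B ≤ 2 * K := by
    rcases eq_or_lt_of_le hB with h | h
    · rw [← h]; simpa using mul_nonneg zero_le_two hK
    · nlinarith
  -- λ A ≤ 2 K
  have hA2 : lam * A ≤ 2 * K := by
    nlinarith [mul_pos hlam0 hlam0, sq_nonneg (lam * A), mul_nonneg hlam0.le hA]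
  -- rpow splittings
  have e1 : lam ^ (2 * r) = lam ^ (2 * r - 2) * lam ^ 2 := by
    rw [show 2 * r = (2 * r - 2) + 2 by ring, Real.rpow_add hlam0, Real.rpow_two]; ring_nf
  have e2 : lam ^ r = lam ^ (r - 1) * lam := by
    rw [show r = (r - 1) + 1 by ring, Real.rpow_add hlam0, Real.rpow_one]; ring_nf
  have b1 : lam ^ (2 * r - 2) ≤ ω ^ (2 * r - 2) :=
    Real.rpow_le_rpow_of_nonpos hω hlam (by linarith)
  have b2 : lam ^ (r - 1) ≤ ω ^ (r - 1) :=
    Real.rpow_le_rpow_of_nonpos hω hlam (by linarith)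
  have t1 : lam ^ (2 * r) * B ≤ ω ^ (2 * r - 2) * (2 * K) := by
    rw [e1, mul_assoc]
    exact mul_le_mul b1 hB2 (by positivity) (by positivity)
  have t2 : lam ^ r * A ≤ ω ^ (r - 1) * (2 * K) := by
    rw [e2, mul_assoc]
    exact mul_le_mul b2 hA2 (by positivity) (by positivity)
  linarith [t1, t2]
end
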